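/- For every natural number m ≥ 1 and every real x with −1/2 < x < 1/2, one has P_m(x) < cos(πx). -/

import Mathlib

open Real

/-- The summand `a_{j,k} = (-π²/4)^k / (2j+2k)! · C(j+k, j)`. -/
noncomputable def a (j k : ℕ) : ℝ :=
  (-(π ^ 2) / 4) ^ k / (Nat.factorial (2 * j + 2 * k)) * (Nat.choose (j + k) j)

/-- `t_j = Σ_{k=0}^∞ a_{j,k}`. -/
noncomputable def t (j : ℕ) : ℝ := ∑' k : ℕ, a j k

/-- `P_m(x) = Σ_{j=1}^m t_j π^{2j} (1/4 − x²)^j`. -/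
noncomputable def P (m : ℕ) (x : ℝ) : ℝ :=
  ∑ j ∈ Finset.Icc 1 m, t j * π ^ (2 * j) * (1 / 4 - x ^ 2) ^ j

lemma abs_a (j k : ℕ) :
    |a j k| = (π ^ 2 / 4) ^ k / (Nat.factorial (2 * j + 2 * k)) * (Nat.choose (j + k) j) := by
  have h : a j k = (-1) ^ k * ((π ^ 2 / 4) ^ k / (Nat.factorial (2 * j + 2 * k)) *
      (Nat.choose (j + k) j)) := by
    unfold a
    rw [neg_div, neg_pow]
    ring
  rw [h, abs_mul, abs_pow, abs_neg, abs_one, one_pow, one_mul, abs_of_nonneg (by positivity)]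

lemma abs_a_le {j : ℕ} (hj : 1 ≤ j) (k : ℕ) :
    |a j k| ≤ (π ^ 2 / 24) ^ k / (Nat.factorial (2 * j)) := by
  induction k with
  | zero => simp [abs_a]
  | succ k ih =>
    have hstep : |a j (k + 1)| ≤ (π ^ 2 / 24) * |a j k| := by
      rw [abs_a, abs_a]
      have hF : (0:ℝ) < (Nat.factorial (2 * j + 2 * k) : ℝ) := by positivity
      have hfac : ((Nat.factorial (2 * j + 2 * (k + 1))) : ℝ) =
          ((2 * j : ℝ) + 2 * k + 2) * (((2 * j : ℝ) + 2 * k + 1) *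
            (Nat.factorial (2 * j + 2 * k))) := by
        have h2 : 2 * j + 2 * (k + 1) = (2 * j + 2 * k + 1) + 1 := by ring
        rw [h2, Nat.factorial_succ, Nat.factorial_succ]
        push_cast
        ring
      have hch : ((Nat.choose (j + (k + 1)) j) : ℝ) * ((k : ℝ) + 1) =
          ((j : ℝ) + k + 1) * (Nat.choose (j + k) j) := by
        have h1 : Nat.choose (j + k) j = Nat.choose (j + k) k := by
          rw [← Nat.choose_symm (Nat.le_add_right j k)]
          congr 1
          omega
        have h2 : Nat.choose (j + (k + 1)) j = Nat.choose (j + k + 1) (k + 1) := by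
          have h := Nat.choose_symm (n := j + k + 1) (k := k + 1) (by omega)
          rw [show j + k + 1 - (k + 1) = j by omega] at h
          rw [show j + (k + 1) = j + k + 1 by omega, ← h]
        have h3 := Nat.add_one_mul_choose_eq (j + k) k
        rw [h1, h2]
        have h4 : ((j : ℝ) + k + 1) * (Nat.choose (j + k) k) =
            (Nat.choose (j + k + 1) (k + 1) : ℝ) * ((k : ℝ) + 1) := by
          exact_mod_cast congrArg (Nat.cast (R := ℝ)) h3
        linarith
      have hj1 : (1 : ℝ) ≤ (j : ℝ) := by exact_mod_cast hj
      have hk0 : (0 : ℝ) ≤ (k : ℝ) := Nat.cast_nonneg k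
      have hcn : (0 : ℝ) ≤ ((Nat.choose (j + k) j : ℕ) : ℝ) := Nat.cast_nonneg _
      have hcn1 : (0 : ℝ) ≤ ((Nat.choose (j + (k + 1)) j : ℕ) : ℝ) := Nat.cast_nonneg _
      have h6 : 6 * ((j : ℝ) + k + 1) ≤ ((2 * j : ℝ) + 2 * k + 1) * ((2 * j : ℝ) + 2 * k + 2) := by
        nlinarith [mul_nonneg (by linarith : (0:ℝ) ≤ (j:ℝ) + k - 1)
          (by linarith : (0:ℝ) ≤ (j:ℝ) + k + 1)]
      have hkey : 6 * ((Nat.choose (j + (k + 1)) j : ℕ) : ℝ) ≤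
          ((2 * j : ℝ) + 2 * k + 1) * ((2 * j : ℝ) + 2 * k + 2) * (Nat.choose (j + k) j) := by
        have hD : (0:ℝ) ≤ ((2 * j : ℝ) + 2 * k + 1) * ((2 * j : ℝ) + 2 * k + 2) := by positivity
        have e1 : 6 * ((Nat.choose (j + (k + 1)) j : ℕ) : ℝ) * ((k : ℝ) + 1) ≤
            ((2 * j : ℝ) + 2 * k + 1) * ((2 * j : ℝ) + 2 * k + 2) * (Nat.choose (j + k) j) *
              ((k : ℝ) + 1) := by
          nlinarith [mul_le_mul_of_nonneg_right h6 hcn, mul_nonneg hD hcn]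
        exact le_of_mul_le_mul_right e1 (by positivity)
      rw [div_mul_eq_mul_div ((π ^ 2 / 4) ^ (k + 1))
            ((Nat.factorial (2 * j + 2 * (k + 1)) : ℝ)) ((Nat.choose (j + (k + 1)) j : ℝ)),
          div_mul_eq_mul_div ((π ^ 2 / 4) ^ k)
            ((Nat.factorial (2 * j + 2 * k) : ℝ)) ((Nat.choose (j + k) j : ℝ)),
          mul_div_assoc' (π ^ 2 / 24) ((π ^ 2 / 4) ^ k * ((Nat.choose (j + k) j : ℕ) : ℝ))
            ((Nat.factorial (2 * j + 2 * k) : ℝ)),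
          div_le_div_iff₀ (by positivity) (by positivity), hfac, pow_succ]
      nlinarith [mul_le_mul_of_nonneg_left hkey
        (by positivity : (0:ℝ) ≤ (π ^ 2 / 4) ^ k * (Nat.factorial (2 * j + 2 * k) : ℝ) *
          (π ^ 2 / 24))]
    calc |a j (k + 1)| ≤ (π ^ 2 / 24) * |a j k| := hstep
      _ ≤ (π ^ 2 / 24) * ((π ^ 2 / 24) ^ k / (Nat.factorial (2 * j))) :=
          mul_le_mul_of_nonneg_left ih (by positivity)
      _ = (π ^ 2 / 24) ^ (k + 1) / (Nat.factorial (2 * j)) := by ring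

lemma r_lt_half : π ^ 2 / 24 < 1 / 2 := by
  nlinarith [pi_lt_d2, pi_gt_three]

lemma summable_abs_a {j : ℕ} (hj : 1 ≤ j) : Summable fun k => |a j k| := by
  apply Summable.of_nonneg_of_le (fun k => abs_nonneg _) (abs_a_le hj)
  have h : Summable fun k : ℕ => (π ^ 2 / 24) ^ k :=
    summable_geometric_of_lt_one (by positivity) (by linarith [r_lt_half])
  apply (h.mul_right ((Nat.factorial (2 * j) : ℝ))⁻¹).congr
  intro k
  ring

set_option maxHeartbeats 2000000 in
lemma t_pos {j : ℕ} (hj : 1 ≤ j) : 0 < t j := by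
  have hr0 : (0:ℝ) ≤ π ^ 2 / 24 := by positivity
  have hr1 : π ^ 2 / 24 < 1 / 2 := r_lt_half
  have habs := summable_abs_a hj
  have hsum : Summable (a j) := habs.of_abs
  have hF : (0:ℝ) < (Nat.factorial (2 * j) : ℝ) := by positivity
  have h0 : t j = a j 0 + ∑' k, a j (k + 1) := hsum.tsum_eq_zero_add
  have ha0 : a j 0 = 1 / (Nat.factorial (2 * j)) := by
    unfold a
    simp
  have htail_sum : Summable fun k => |a j (k + 1)| := (summable_nat_add_iff 1).2 habs
  have h1 : |∑' k, a j (k + 1)| ≤ ∑' k, |a j (k + 1)| := by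
    have hn : ‖∑' k, a j (k + 1)‖ ≤ ∑' k, ‖a j (k + 1)‖ := norm_tsum_le_tsum_norm htail_sum
    simpa only [Real.norm_eq_abs] using hn
  have hgeo : Summable fun k : ℕ => (π ^ 2 / 24) ^ (k + 1) / (Nat.factorial (2 * j)) := by
    have h : Summable fun k : ℕ => (π ^ 2 / 24) ^ k :=
      summable_geometric_of_lt_one hr0 (by linarith)
    apply (h.mul_right ((π ^ 2 / 24) / (Nat.factorial (2 * j) : ℝ))).congr
    intro k
    ring
  have h2 : ∑' k, |a j (k + 1)| ≤
      ∑' k : ℕ, (π ^ 2 / 24) ^ (k + 1) / (Nat.factorial (2 * j)) :=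
    Summable.tsum_le_tsum (fun k => abs_a_le hj (k + 1)) htail_sum hgeo
  have h3 : ∑' k : ℕ, (π ^ 2 / 24) ^ (k + 1) / (Nat.factorial (2 * j)) =
      (1 - π ^ 2 / 24)⁻¹ * ((π ^ 2 / 24) / (Nat.factorial (2 * j))) := by
    have h : (fun k : ℕ => (π ^ 2 / 24) ^ (k + 1) / (Nat.factorial (2 * j) : ℝ)) =
        fun k : ℕ => (π ^ 2 / 24) ^ k * ((π ^ 2 / 24) / (Nat.factorial (2 * j) : ℝ)) := by
      funext k
      ring
    rw [h, tsum_mul_right, tsum_geometric_of_lt_one hr0 (by linarith)]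
  have hB : (1 - π ^ 2 / 24)⁻¹ * ((π ^ 2 / 24) / (Nat.factorial (2 * j))) <
      1 / (Nat.factorial (2 * j)) := by
    have he : (1 - π ^ 2 / 24)⁻¹ * ((π ^ 2 / 24) / (Nat.factorial (2 * j) : ℝ)) =
        (π ^ 2 / 24) / ((1 - π ^ 2 / 24) * (Nat.factorial (2 * j) : ℝ)) := by
      rw [div_mul_eq_div_div_swap, div_div]
      ring
    rw [he, div_lt_div_iff₀ (mul_pos (by linarith) hF) hF, one_mul]
    nlinarith [mul_pos (show (0:ℝ) < 1 - 2 * (π ^ 2 / 24) by linarith) hF]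
  have hlow := neg_abs_le (∑' k, a j (k + 1))
  rw [h0, ha0]
  linarith

lemma t_zero : t 0 = 0 := by
  have h : ∀ k : ℕ, a 0 k = (-1) ^ k * (π / 2) ^ (2 * k) / (Nat.factorial (2 * k)) := by
    intro k
    unfold a
    have h1 : 2 * 0 + 2 * k = 2 * k := by ring
    have h2 : 0 + k = k := by ring
    rw [h1, h2, Nat.choose_zero_right]
    have h3 : (-(π ^ 2) / 4 : ℝ) = -((π / 2) ^ 2) := by ring
    rw [h3, neg_pow, ← pow_mul]
    push_cast
    ring
  unfold t
  rw [tsum_congr h, ← Real.cos_eq_tsum, Real.cos_pi_div_two]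

lemma antidiag_sum (A c : ℝ) (n : ℕ) :
    ∑ p ∈ Finset.HasAntidiagonal.antidiagonal n,
      (A ^ p.2 / (Nat.factorial (2 * p.1 + 2 * p.2)) * (Nat.choose (p.1 + p.2) p.1)) * c ^ p.1
        = (c + A) ^ n / (Nat.factorial (2 * n)) := by
  rw [Finset.Nat.sum_antidiagonal_eq_sum_range_succ_mk, add_pow, Finset.sum_div]
  apply Finset.sum_congr rfl
  intro k hk
  have hk' : k ≤ n := Nat.lt_succ_iff.mp (Finset.mem_range.mp hk)
  dsimp only
  have h1 : k + (n - k) = n := by omega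
  have h2 : 2 * k + 2 * (n - k) = 2 * n := by omega
  rw [h1, h2]
  ring

lemma summable_fabs (c : ℝ) (hc : 0 ≤ c) :
    Summable fun p : ℕ × ℕ => |a p.1 p.2 * c ^ p.1| := by
  have habs : ∀ p : ℕ × ℕ, |a p.1 p.2 * c ^ p.1| =
      ((π ^ 2 / 4) ^ p.2 / (Nat.factorial (2 * p.1 + 2 * p.2)) *
        (Nat.choose (p.1 + p.2) p.1)) * c ^ p.1 := by
    intro p
    rw [abs_mul, abs_a, abs_pow, abs_of_nonneg hc]
  rw [← Finset.HasAntidiagonal.sigmaAntidiagonalEquivProd.summable_iff]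
  apply (summable_sigma_of_nonneg (fun _ => abs_nonneg _)).2
  refine ⟨fun n => Summable.of_finite, ?_⟩
  have key : ∀ n : ℕ, (∑' y : (Finset.HasAntidiagonal.antidiagonal n : Finset (ℕ × ℕ)),
      |a (y : ℕ × ℕ).1 (y : ℕ × ℕ).2 * c ^ (y : ℕ × ℕ).1|) =
      (c + π ^ 2 / 4) ^ n / (Nat.factorial (2 * n)) := by
    intro n
    rw [Finset.tsum_subtype (Finset.HasAntidiagonal.antidiagonal n)
      (fun p : ℕ × ℕ => |a p.1 p.2 * c ^ p.1|)]
    rw [← antidiag_sum (π ^ 2 / 4) c n]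
    exact Finset.sum_congr rfl fun p _ => habs p
  have hbig : Summable fun n : ℕ => (c + π ^ 2 / 4) ^ n / ((Nat.factorial (2 * n)) : ℝ) := by
    apply Summable.of_nonneg_of_le (fun n => by positivity)
      (fun n => ?_) (Real.summable_pow_div_factorial (c + π ^ 2 / 4))
    apply div_le_div_of_nonneg_left ?_ (by positivity) ?_
    · positivity
    · exact_mod_cast Nat.factorial_le (by omega : n ≤ 2 * n)
  exact hbig.congr fun n => (key n).symm

lemma tsum_f (c : ℝ) (hc : 0 ≤ c) :
    ∑' p : ℕ × ℕ, a p.1 p.2 * c ^ p.1 =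
      ∑' n : ℕ, (c - π ^ 2 / 4) ^ n / (Nat.factorial (2 * n)) := by
  have hs : Summable fun p : ℕ × ℕ => a p.1 p.2 * c ^ p.1 := (summable_fabs c hc).of_abs
  have hs2 : Summable (fun σ : (Σ n : ℕ, (Finset.HasAntidiagonal.antidiagonal n : Finset (ℕ × ℕ))) =>
      a ((σ.2 : ℕ × ℕ)).1 ((σ.2 : ℕ × ℕ)).2 * c ^ ((σ.2 : ℕ × ℕ)).1) :=
    Finset.HasAntidiagonal.sigmaAntidiagonalEquivProd.summable_iff.2 hs
  have e1 : ∑' p : ℕ × ℕ, a p.1 p.2 * c ^ p.1 =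
      ∑' σ : (Σ n : ℕ, (Finset.HasAntidiagonal.antidiagonal n : Finset (ℕ × ℕ))),
        a ((σ.2 : ℕ × ℕ)).1 ((σ.2 : ℕ × ℕ)).2 * c ^ ((σ.2 : ℕ × ℕ)).1 :=
    (Finset.HasAntidiagonal.sigmaAntidiagonalEquivProd.tsum_eq (fun p : ℕ × ℕ => a p.1 p.2 * c ^ p.1)).symm
  rw [e1, Summable.tsum_sigma hs2]
  apply tsum_congr
  intro n
  have h1 : (∑' y : (Finset.HasAntidiagonal.antidiagonal n : Finset (ℕ × ℕ)),
      a (y : ℕ × ℕ).1 (y : ℕ × ℕ).2 * c ^ (y : ℕ × ℕ).1) =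
      (c + -(π ^ 2) / 4) ^ n / (Nat.factorial (2 * n)) := by
    rw [Finset.tsum_subtype (Finset.HasAntidiagonal.antidiagonal n)
      (fun p : ℕ × ℕ => a p.1 p.2 * c ^ p.1)]
    rw [← antidiag_sum (-(π ^ 2) / 4) c n]
    rfl
  rw [h1]
  congr 2
  ring

set_option maxHeartbeats 2000000 in
theorem P_lt_cos (m : ℕ) (hm : 1 ≤ m) (x : ℝ) (hx1 : -(1 / 2) < x) (hx2 : x < 1 / 2) :
    P m x < Real.cos (π * x) := by
  set c : ℝ := π ^ 2 * (1 / 4 - x ^ 2) with hc_def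
  have hq : 0 < 1 / 4 - x ^ 2 := by nlinarith
  have hc : 0 < c := by
    have := Real.pi_pos
    positivity
  have ht_nonneg : ∀ j : ℕ, 0 ≤ t j := by
    intro j
    rcases Nat.eq_zero_or_pos j with h | h
    · rw [h, t_zero]
    · exact (t_pos h).le
  have hfabs := summable_fabs c hc.le
  have hpair := (summable_prod_of_nonneg (fun p => abs_nonneg _)).1 hfabs
  have hmarg : Summable fun j : ℕ => t j * c ^ j := by
    apply Summable.of_norm_bounded hpair.2
    intro j
    have hn : ‖∑' k, a j k * c ^ j‖ ≤ ∑' k, ‖a j k * c ^ j‖ :=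
      norm_tsum_le_tsum_norm (hpair.1 j)
    rw [tsum_mul_right] at hn
    exact hn
  have hcos : ∑' j : ℕ, t j * c ^ j = Real.cos (π * x) := by
    have h1 : ∑' j : ℕ, t j * c ^ j = ∑' (j : ℕ) (k : ℕ), a j k * c ^ j := by
      apply tsum_congr
      intro j
      exact (tsum_mul_right).symm
    have h2 := Summable.tsum_prod' ((summable_fabs c hc.le).of_abs) (fun b => (hpair.1 b).of_abs)
    have h3 : ∑' n : ℕ, (c - π ^ 2 / 4) ^ n / (Nat.factorial (2 * n)) = Real.cos (π * x) := by
      rw [Real.cos_eq_tsum]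
      apply tsum_congr
      intro n
      have hbase : c - π ^ 2 / 4 = -((π * x) ^ 2) := by
        rw [hc_def]
        ring
      rw [hbase, neg_pow, ← pow_mul]
    rw [h1, ← h2]
    rw [tsum_f c hc.le]
    exact h3
  have hsplit := Summable.sum_add_tsum_nat_add (f := fun j : ℕ => t j * c ^ j) (m + 1) hmarg
  have hP : ∑ j ∈ Finset.range (m + 1), t j * c ^ j = P m x := by
    rw [Finset.sum_range_succ']
    rw [t_zero, zero_mul, add_zero]
    unfold P
    rw [← Finset.Ico_add_one_right_eq_Icc, Finset.sum_Ico_eq_sum_range, show m + 1 - 1 = m from by omega]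
    apply Finset.sum_congr rfl
    intro i _
    rw [show 1 + i = i + 1 from by omega, hc_def, mul_pow, ← pow_mul]
    ring
  have htail : 0 < ∑' j : ℕ, t (j + (m + 1)) * c ^ (j + (m + 1)) := by
    apply Summable.tsum_pos ((summable_nat_add_iff (m + 1)).2 hmarg)
      (fun j => mul_nonneg (ht_nonneg _) (by positivity)) 0
    exact mul_pos (t_pos (by omega)) (by positivity)
  rw [← hcos, ← hsplit, hP]
  linarith
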